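/- Let V be a finite-dimensional subspace and W a closed subspace of a Hilbert space H with β(V,W) := inf_{v∈V,v≠0} ‖P_W v‖/‖v‖ > 0. Then for every w ∈ W there exists a unique u* in the affine space H_w := { u ∈ H : P_W u = w } minimizing ‖u - P_V u‖ over H_w. -/

import Mathlib

open Filter Topology RealInnerProductSpace

/-- If `V` is finite-dimensional, `W` closed with `β(V,W) > 0`, then for every `w ∈ W`
there is a unique `u*` in the affine space `H_w = {u : P_W u = w}` minimizing
`‖u - P_V u‖` over `H_w`. -/
theorem stmt7 {H : Type*} [NormedAddCommGroup H] [InnerProductSpace ℝ H] [CompleteSpace H]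
    (V W : Submodule ℝ H) [FiniteDimensional ℝ V] [Submodule.HasOrthogonalProjection W]
    (hβ : ∃ β > (0 : ℝ), ∀ v ∈ V, β * ‖v‖ ≤ ‖(Submodule.orthogonalProjectionOnto W v : H)‖)
    (w : H) (hw : w ∈ W) :
    ∃! u : H, (Submodule.orthogonalProjectionOnto W u : H) = w ∧
      ∀ u' : H, (Submodule.orthogonalProjectionOnto W u' : H) = w →
        ‖u - (Submodule.orthogonalProjectionOnto V u : H)‖ ≤ ‖u' - (Submodule.orthogonalProjectionOnto V u' : H)‖ := by
  classical
  obtain ⟨β, hβ0, hβle⟩ := hβ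
  -- norm of projection is ≤ norm
  have hPle : ∀ x : H, ‖(Submodule.orthogonalProjectionOnto W x : H)‖ ≤ ‖x‖ := by
    intro x
    have h1 := Submodule.norm_sq_eq_add_norm_sq_projection x W
    simp only [Submodule.coe_norm] at h1
    nlinarith [norm_nonneg x, norm_nonneg ((Submodule.orthogonalProjectionOnto W x : H)),
      norm_nonneg ((Submodule.orthogonalProjectionOnto Wᗮ x : H)), sq_nonneg ‖(Submodule.orthogonalProjectionOnto Wᗮ x : H)‖]
  -- key estimate
  have hkey : ∀ v ∈ V, ∀ z ∈ Wᗮ, β * ‖v‖ ≤ ‖v + z‖ := by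
    intro v hv z hz
    have hz0 : Submodule.orthogonalProjectionOnto W z = 0 :=
      Submodule.orthogonalProjectionOnto_apply_of_mem_orthogonal hz
    have h0 : (Submodule.orthogonalProjectionOnto W (v + z) : H) = (Submodule.orthogonalProjectionOnto W v : H) := by
      rw [map_add, hz0]; simp
    calc β * ‖v‖ ≤ ‖(Submodule.orthogonalProjectionOnto W v : H)‖ := hβle v hv
      _ = ‖(Submodule.orthogonalProjectionOnto W (v + z) : H)‖ := by rw [h0]
      _ ≤ ‖v + z‖ := hPle _
  -- trivial intersection
  have hVZ : ∀ x ∈ V, x ∈ Wᗮ → x = (0 : H) := by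
    intro x hxV hxZ
    have h1 := hkey x hxV (-x) (neg_mem hxZ)
    simp only [add_neg_cancel, norm_zero] at h1
    have h2 : ‖x‖ ≤ 0 := by nlinarith
    exact norm_le_zero_iff.mp h2
  set S : Submodule ℝ H := V ⊔ Wᗮ with hS
  have hVcl : IsClosed (V : Set H) := Submodule.closed_of_finiteDimensional V
  have hmemS : ∀ x ∈ S, ∃ v ∈ V, ∃ z ∈ Wᗮ, v + z = x := fun x hx => Submodule.mem_sup.mp hx
  -- S is closed
  have hScl : IsClosed (S : Set H) := by
    apply IsSeqClosed.isClosed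
    intro x p hx hp
    choose v hv z hz hvz using fun n => hmemS (x n) (hx n)
    have hxc : CauchySeq x := hp.cauchySeq
    have hvc : CauchySeq v := by
      rw [Metric.cauchySeq_iff] at hxc ⊢
      intro ε hε
      obtain ⟨N, hN⟩ := hxc (β * ε) (by positivity)
      refine ⟨N, fun m hm n hn => ?_⟩
      have h1 := hkey (v m - v n) (sub_mem (hv m) (hv n)) (z m - z n) (sub_mem (hz m) (hz n))
      have h2 : (v m - v n) + (z m - z n) = x m - x n := by
        rw [← hvz m, ← hvz n]; abel
      rw [h2] at h1
      have h3 : ‖x m - x n‖ < β * ε := by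
        have := hN m hm n hn; rwa [dist_eq_norm] at this
      rw [dist_eq_norm]
      nlinarith [norm_nonneg (v m - v n)]
    obtain ⟨vl, hvl, hvt⟩ := cauchySeq_tendsto_of_isComplete hVcl.isComplete hv hvc
    have hzt : Tendsto (fun n => x n - v n) atTop (𝓝 (p - vl)) := hp.sub hvt
    have hzl : p - vl ∈ Wᗮ := by
      have hmem : ∀ n, x n - v n ∈ (Wᗮ : Set H) := by
        intro n
        have : x n - v n = z n := by rw [← hvz n]; abel
        rw [this]; exact hz n
      exact W.isClosed_orthogonal.mem_of_tendsto hzt (Eventually.of_forall hmem)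
    have hp' : p = vl + (p - vl) := by abel
    rw [hp']
    exact Submodule.add_mem_sup hvl hzl
  haveI : CompleteSpace S := hScl.completeSpace_coe
  set sproj : H := (Submodule.orthogonalProjectionOnto S w : H) with hsproj
  obtain ⟨v0, hv0, z0, hz0, hvz0⟩ := hmemS sproj (Submodule.coe_mem _)
  -- minimality over V via Pythagoras
  have hminV : ∀ (x v : H), v ∈ V → ‖x - (Submodule.orthogonalProjectionOnto V x : H)‖ ≤ ‖x - v‖ := by
    intro x v hv
    have h1 : x - v = (x - (Submodule.orthogonalProjectionOnto V x : H)) + ((Submodule.orthogonalProjectionOnto V x : H) - v) := by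
      abel
    have h2 : ⟪x - (Submodule.orthogonalProjectionOnto V x : H), (Submodule.orthogonalProjectionOnto V x : H) - v⟫ = 0 :=
      Submodule.starProjection_inner_eq_zero x _ (sub_mem (Submodule.coe_mem _) hv)
    have h3 : ‖x - v‖ ^ 2 = ‖x - (Submodule.orthogonalProjectionOnto V x : H)‖ ^ 2 +
        ‖(Submodule.orthogonalProjectionOnto V x : H) - v‖ ^ 2 := by
      rw [h1, norm_add_sq_real, h2]; ring
    nlinarith [norm_nonneg (x - (Submodule.orthogonalProjectionOnto V x : H)), norm_nonneg (x - v),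
      sq_nonneg ‖(Submodule.orthogonalProjectionOnto V x : H) - v‖]
  -- Pythagoras for S
  have hpythS : ∀ s' ∈ S, ‖w - s'‖ ^ 2 = ‖w - sproj‖ ^ 2 + ‖sproj - s'‖ ^ 2 := by
    intro s' hs'
    have h1 : w - s' = (w - sproj) + (sproj - s') := by abel
    have h2 : ⟪w - sproj, sproj - s'⟫ = 0 :=
      Submodule.starProjection_inner_eq_zero w _ (sub_mem (Submodule.coe_mem _) hs')
    rw [h1, norm_add_sq_real, h2]; ring
  have hminS : ∀ s' ∈ S, ‖w - sproj‖ ≤ ‖w - s'‖ := by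
    intro s' hs'
    have := hpythS s' hs'
    nlinarith [norm_nonneg (w - sproj), norm_nonneg (w - s'), sq_nonneg ‖sproj - s'‖]
  have huniqS : ∀ s' ∈ S, ‖w - s'‖ ≤ ‖w - sproj‖ → s' = sproj := by
    intro s' hs' hle
    have h1 := hpythS s' hs'
    have h2 : ‖sproj - s'‖ ^ 2 ≤ 0 := by
      nlinarith [norm_nonneg (w - sproj), norm_nonneg (w - s'), hminS s' hs']
    have h3 : ‖sproj - s'‖ = 0 := by nlinarith [norm_nonneg (sproj - s')]
    have h4 := norm_eq_zero.mp h3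
    exact (sub_eq_zero.mp h4).symm
  set u : H := w - z0 with hu
  have hwproj : (Submodule.orthogonalProjectionOnto W w : H) = w := Submodule.starProjection_eq_self_iff.mpr hw
  have hPzero : ∀ z ∈ Wᗮ, (Submodule.orthogonalProjectionOnto W z : H) = 0 := by
    intro z hz
    rw [Submodule.orthogonalProjectionOnto_apply_of_mem_orthogonal hz]
    simp
  have hPuw : (Submodule.orthogonalProjectionOnto W u : H) = w := by
    rw [hu, map_sub, Submodule.coe_sub, hwproj, hPzero z0 hz0, sub_zero]
  have hchar : ∀ u' : H, (Submodule.orthogonalProjectionOnto W u' : H) = w → u' - w ∈ Wᗮ := by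
    intro u' h
    have h0 : (Submodule.orthogonalProjectionOnto W (u' - w) : H) = 0 := by
      rw [map_sub, Submodule.coe_sub, h, hwproj, sub_self]
    exact Submodule.orthogonalProjectionOnto_eq_zero_iff.mp (Submodule.coe_eq_zero.mp h0)
  have hlow : ∀ u' : H, (Submodule.orthogonalProjectionOnto W u' : H) = w →
      ‖w - sproj‖ ≤ ‖u' - (Submodule.orthogonalProjectionOnto V u' : H)‖ := by
    intro u' h
    have hz' : u' - w ∈ Wᗮ := hchar u' h
    have hs' : (Submodule.orthogonalProjectionOnto V u' : H) - (u' - w) ∈ S :=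
      sub_mem (Submodule.mem_sup_left (Submodule.coe_mem _)) (Submodule.mem_sup_right hz')
    have heq : u' - (Submodule.orthogonalProjectionOnto V u' : H)
        = w - ((Submodule.orthogonalProjectionOnto V u' : H) - (u' - w)) := by abel
    rw [heq]
    exact hminS _ hs'
  have hup : ‖u - (Submodule.orthogonalProjectionOnto V u : H)‖ ≤ ‖w - sproj‖ := by
    have h1 : u - v0 = w - sproj := by rw [hu, ← hvz0]; abel
    calc ‖u - (Submodule.orthogonalProjectionOnto V u : H)‖ ≤ ‖u - v0‖ := hminV u v0 hv0
      _ = ‖w - sproj‖ := by rw [h1]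
  refine ⟨u, ⟨hPuw, fun u' h => le_trans hup (hlow u' h)⟩, ?_⟩
  rintro u₁ ⟨h1, h2⟩
  have hfu1 : ‖u₁ - (Submodule.orthogonalProjectionOnto V u₁ : H)‖ ≤ ‖w - sproj‖ :=
    le_trans (h2 u hPuw) hup
  have hz1 : u₁ - w ∈ Wᗮ := hchar u₁ h1
  set s1 : H := (Submodule.orthogonalProjectionOnto V u₁ : H) - (u₁ - w) with hs1def
  have hs1 : s1 ∈ S :=
    sub_mem (Submodule.mem_sup_left (Submodule.coe_mem _)) (Submodule.mem_sup_right hz1)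
  have heq : ‖w - s1‖ = ‖u₁ - (Submodule.orthogonalProjectionOnto V u₁ : H)‖ := by
    rw [show w - s1 = u₁ - (Submodule.orthogonalProjectionOnto V u₁ : H) by rw [hs1def]; abel]
  have hs1e : s1 = sproj := huniqS s1 hs1 (by rw [heq]; exact hfu1)
  have hx0 : (Submodule.orthogonalProjectionOnto V u₁ : H) - v0 = (u₁ - w) + z0 := by
    have h : (Submodule.orthogonalProjectionOnto V u₁ : H) - (u₁ - w) = v0 + z0 := by
      rw [← hs1def, hs1e, ← hvz0]
    have h2' : (Submodule.orthogonalProjectionOnto V u₁ : H) - v0 - ((u₁ - w) + z0)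
        = ((Submodule.orthogonalProjectionOnto V u₁ : H) - (u₁ - w)) - (v0 + z0) := by abel
    rw [h, sub_self] at h2'
    exact sub_eq_zero.mp h2'
  have hxz : (Submodule.orthogonalProjectionOnto V u₁ : H) - v0 = 0 :=
    hVZ _ (sub_mem (Submodule.coe_mem _) hv0) (by rw [hx0]; exact add_mem hz1 hz0)
  have hzz : (u₁ - w) + z0 = 0 := by rw [← hx0, hxz]
  have hfin : u₁ - u = (u₁ - w) + z0 := by rw [hu]; abel
  have : u₁ - u = 0 := by rw [hfin, hzz]
  exact sub_eq_zero.mp this
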